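/- Let X be a Banach space and F a finite-dimensional linear subspace of the bidual X** such that X ∩ F = {0} (identifying X with its canonical image in X**). Then for every δ > 0 and every x ∈ X with ‖x‖ = 1, there exists x* ∈ X* with ‖x*‖ ≤ 1 + δ such that x*(x) ≥ d(S_X, F) and x**(x*) = 0 for every x** ∈ F. -/

import Mathlib

open NormedSpace Metric Filter

set_option maxHeartbeats 1000000

section Aux

@[reducible] noncomputable def instSubStrongDualNAG {E : Type*} [NormedAddCommGroup E] [NormedSpace ℝ E]
    (G : Submodule ℝ (StrongDual ℝ E)) : NormedAddCommGroup G := Submodule.normedAddCommGroup G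

@[reducible] noncomputable def instSubStrongDualNS {E : Type*} [NormedAddCommGroup E] [NormedSpace ℝ E]
    (G : Submodule ℝ (StrongDual ℝ E)) : NormedSpace ℝ G := Submodule.normedSpace G

attribute [local instance] instSubStrongDualNAG instSubStrongDualNS

/-- Weak form of reflexivity for finite-dimensional real normed spaces: every element of the
double dual is evaluation at a point. -/
lemma aux_reflexive {G : Type*} [NormedAddCommGroup G] [NormedSpace ℝ G]
    [FiniteDimensional ℝ G] (ξ : StrongDual ℝ (StrongDual ℝ G)) :
    ∃ g : G, ∀ χ : StrongDual ℝ G, ξ χ = χ g := by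
  haveI : FiniteDimensional ℝ (StrongDual ℝ G) :=
    (LinearMap.toContinuousLinearMap : (G →ₗ[ℝ] ℝ) ≃ₗ[ℝ] (G →L[ℝ] ℝ)).finiteDimensional
  haveI : FiniteDimensional ℝ (StrongDual ℝ (StrongDual ℝ G)) :=
    (LinearMap.toContinuousLinearMap :
      (StrongDual ℝ G →ₗ[ℝ] ℝ) ≃ₗ[ℝ] (StrongDual ℝ G →L[ℝ] ℝ)).finiteDimensional
  have hd : ∀ (V : Type _) [NormedAddCommGroup V] [NormedSpace ℝ V] [FiniteDimensional ℝ V],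
      Module.finrank ℝ (StrongDual ℝ V) = Module.finrank ℝ V := by
    intro V _ _ _
    have h1 : Module.finrank ℝ (V →ₗ[ℝ] ℝ) = Module.finrank ℝ (StrongDual ℝ V) :=
      (LinearMap.toContinuousLinearMap : (V →ₗ[ℝ] ℝ) ≃ₗ[ℝ] (V →L[ℝ] ℝ)).finrank_eq
    have h2 : Module.finrank ℝ (Module.Dual ℝ V) = Module.finrank ℝ V :=
      Subspace.dual_finrank_eq
    rw [← h1]
    exact h2
  have hrank : Module.finrank ℝ G = Module.finrank ℝ (StrongDual ℝ (StrongDual ℝ G)) := by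
    rw [hd (StrongDual ℝ G), hd G]
  let T : G →ₗ[ℝ] StrongDual ℝ (StrongDual ℝ G) := (inclusionInDoubleDual ℝ G).toLinearMap
  have hker : ∀ z : G, T z = 0 → z = 0 := by
    intro z hz
    by_contra h0
    obtain ⟨χ, hχ1, hχ2⟩ := exists_dual_vector ℝ z (norm_ne_zero_iff.mpr h0)
    have h0' : χ z = 0 := by
      have hTz : T z χ = χ z := rfl
      rw [hz] at hTz
      simpa using hTz.symm
    rw [h0'] at hχ2
    have hz0 : ‖z‖ = 0 := by exact_mod_cast hχ2.symm
    exact h0 (norm_eq_zero.mp hz0)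
  have hinj : Function.Injective T := by
    intro a b hab
    have h := hker (a - b) (by rw [map_sub, hab, sub_self])
    exact sub_eq_zero.mp h
  have hsurj := (LinearMap.injective_iff_surjective_of_finrank_eq_finrank hrank (V₂ := StrongDual ℝ (StrongDual ℝ G))).mp hinj
  obtain ⟨g, hg⟩ := hsurj ξ
  refine ⟨g, fun χ => ?_⟩
  rw [← hg]
  rfl

variable {E : Type*} [NormedAddCommGroup E] [NormedSpace ℝ E]

/-- Helly-type density: the image of the closed unit ball of `E` under restriction to a
finite-dimensional subspace `G` of the dual is dense in the unit ball of `G*`. -/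
lemma aux_dense (G : Submodule ℝ (StrongDual ℝ E)) [FiniteDimensional ℝ G]
    (ψ : StrongDual ℝ ↥G) (hψ : ‖ψ‖ ≤ 1) :
    ψ ∈ closure (G.subtypeL.flip '' closedBall 0 1) := by
  by_contra hmem
  have hconv : Convex ℝ (closure (G.subtypeL.flip '' closedBall (0:E) 1)) := by
    refine Convex.closure ?_
    have := (convex_closedBall (0:E) 1).linear_image (G.subtypeL.flip : E →ₗ[ℝ] StrongDual ℝ ↥G)
    simpa using this
  obtain ⟨ξ, u, hlt, hu⟩ := geometric_hahn_banach_closed_point hconv isClosed_closure hmem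
  obtain ⟨g, hg⟩ := aux_reflexive ξ
  have hu0 : 0 < u := by
    have h0 : (0 : StrongDual ℝ ↥G) ∈ closure (G.subtypeL.flip '' closedBall (0:E) 1) :=
      subset_closure ⟨0, mem_closedBall_self zero_le_one, by simp⟩
    have := hlt _ h0
    simpa using this
  have hball : ∀ f : E, ‖f‖ ≤ 1 → (g : StrongDual ℝ E) f < u := by
    intro f hf
    have hmem2 : G.subtypeL.flip f ∈ closure (G.subtypeL.flip '' closedBall (0:E) 1) :=
      subset_closure ⟨f, by simpa [dist_zero_right] using hf, rfl⟩
    have := hlt _ hmem2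
    rwa [hg, ContinuousLinearMap.flip_apply, Submodule.subtypeL_apply] at this
  have hgnorm : ‖(g : StrongDual ℝ E)‖ ≤ u := by
    by_contra h
    push_neg at h
    obtain ⟨f, hf1, hf2⟩ := (g : StrongDual ℝ E).exists_lt_apply_of_lt_opNorm h
    rcases le_or_gt 0 ((g : StrongDual ℝ E) f) with hs | hs
    · have : (g : StrongDual ℝ E) f < u := hball f hf1.le
      rw [Real.norm_eq_abs, abs_of_nonneg hs] at hf2
      linarith
    · have hneg : (g : StrongDual ℝ E) (-f) < u := by
        refine hball (-f) ?_
        rw [norm_neg]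
        exact hf1.le
      rw [map_neg] at hneg
      rw [Real.norm_eq_abs, abs_of_neg hs] at hf2
      linarith
  have h1 : u < ψ g := by
    have := hu
    rwa [hg] at this
  have h2 : ψ g ≤ ‖(g : StrongDual ℝ E)‖ := by
    calc ψ g ≤ ‖ψ g‖ := le_abs_self _
    _ ≤ ‖ψ‖ * ‖g‖ := ψ.le_opNorm g
    _ ≤ 1 * ‖g‖ := by
        have : (0:ℝ) ≤ ‖g‖ := norm_nonneg _
        exact mul_le_mul_of_nonneg_right hψ this
    _ = ‖(g : StrongDual ℝ E)‖ := by rw [one_mul]; rfl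
  linarith

/-- Exact surjectivity with norm control `(1 + δ)`. -/
lemma aux_surj [CompleteSpace E] (G : Submodule ℝ (StrongDual ℝ E)) [FiniteDimensional ℝ G]
    {δ : ℝ} (hδ : 0 < δ) (ψ : StrongDual ℝ ↥G) :
    ∃ f : E, ‖f‖ ≤ (1 + δ) * ‖ψ‖ ∧ G.subtypeL.flip f = ψ := by
  set θ : ℝ := δ / (1 + δ) with hθdef
  have hδ1 : (0:ℝ) < 1 + δ := by linarith
  have hθ0 : 0 ≤ θ := by positivity
  have hθpos : 0 < θ := by positivity
  have hθ1 : θ < 1 := by rw [hθdef, div_lt_one hδ1]; linarith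
  have step : ∀ φ : StrongDual ℝ ↥G, ∃ f : E, ‖f‖ ≤ ‖φ‖ ∧ ‖φ - G.subtypeL.flip f‖ ≤ θ * ‖φ‖ := by
    intro φ
    rcases eq_or_ne φ 0 with rfl | hφ
    · refine ⟨0, ?_, ?_⟩
      · rw [norm_zero]; exact norm_nonneg _
      · rw [map_zero, sub_zero, norm_zero]
        exact le_of_eq (mul_zero θ).symm
    · have hφ0 : 0 < ‖φ‖ := lt_of_le_of_ne (norm_nonneg φ) fun h => hφ (φ.opNorm_zero_iff.mp h.symm)
      have h1 : ‖(‖φ‖⁻¹ • φ)‖ ≤ 1 := by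
        rw [norm_smul, norm_inv, norm_norm, inv_mul_cancel₀ hφ0.ne']
      have hcl := aux_dense G (‖φ‖⁻¹ • φ) h1
      rw [Metric.mem_closure_iff] at hcl
      obtain ⟨b, ⟨f₀, hf₀, rfl⟩, hdist⟩ := hcl θ hθpos
      rw [mem_closedBall, dist_zero_right] at hf₀
      refine ⟨‖φ‖ • f₀, ?_, ?_⟩
      · rw [norm_smul, norm_norm]
        calc ‖φ‖ * ‖f₀‖ ≤ ‖φ‖ * 1 := mul_le_mul_of_nonneg_left hf₀ hφ0.le
        _ = ‖φ‖ := mul_one _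
      · have heq : φ - G.subtypeL.flip (‖φ‖ • f₀)
            = ‖φ‖ • (‖φ‖⁻¹ • φ - G.subtypeL.flip f₀) := by
          rw [smul_sub, smul_inv_smul₀ hφ0.ne', map_smul]
        rw [heq, norm_smul, norm_norm]
        have : ‖‖φ‖⁻¹ • φ - G.subtypeL.flip f₀‖ ≤ θ := by
          have := hdist
          rw [dist_eq_norm] at this
          exact this.le
        calc ‖φ‖ * ‖‖φ‖⁻¹ • φ - G.subtypeL.flip f₀‖ ≤ ‖φ‖ * θ :=
          mul_le_mul_of_nonneg_left this hφ0.le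
        _ = θ * ‖φ‖ := mul_comm _ _
  choose A hA1 hA2 using step
  let ψs : ℕ → StrongDual ℝ ↥G := fun n => Nat.recAux ψ (fun _ φ => φ - G.subtypeL.flip (A φ)) n
  have hψs0 : ψs 0 = ψ := rfl
  have hψsS : ∀ n, ψs (n + 1) = ψs n - G.subtypeL.flip (A (ψs n)) := fun n => rfl
  have hnorm : ∀ n, ‖ψs n‖ ≤ θ ^ n * ‖ψ‖ := by
    intro n
    induction n with
    | zero => simp [hψs0]
    | succ n ih =>
      rw [hψsS]
      calc ‖ψs n - G.subtypeL.flip (A (ψs n))‖ ≤ θ * ‖ψs n‖ := hA2 _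
      _ ≤ θ * (θ ^ n * ‖ψ‖) := mul_le_mul_of_nonneg_left ih hθ0
      _ = θ ^ (n + 1) * ‖ψ‖ := by ring
  have hfb : ∀ n, ‖A (ψs n)‖ ≤ θ ^ n * ‖ψ‖ := fun n => (hA1 _).trans (hnorm n)
  have hgeo : Summable fun n : ℕ => θ ^ n * ‖ψ‖ :=
    (summable_geometric_of_lt_one hθ0 hθ1).mul_right ‖ψ‖
  have hsum : Summable fun n => A (ψs n) := Summable.of_norm_bounded hgeo hfb
  have hsum2 : Summable fun n => ‖A (ψs n)‖ :=
    Summable.of_nonneg_of_le (fun _ => norm_nonneg _) hfb hgeo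
  set f := ∑' n, A (ψs n) with hf
  have hfnorm : ‖f‖ ≤ (1 + δ) * ‖ψ‖ := by
    calc ‖f‖ ≤ ∑' n, ‖A (ψs n)‖ := norm_tsum_le_tsum_norm hsum2
    _ ≤ ∑' n : ℕ, θ ^ n * ‖ψ‖ := Summable.tsum_le_tsum hfb hsum2 hgeo
    _ = (1 - θ)⁻¹ * ‖ψ‖ := by rw [tsum_mul_right, tsum_geometric_of_lt_one hθ0 hθ1]
    _ = (1 + δ) * ‖ψ‖ := by
        congr 1
        have h1 : 1 - θ = 1 / (1 + δ) := by
          rw [hθdef]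
          field_simp
          ring
        rw [h1, one_div, inv_inv]
  have hpartial : ∀ n, ∑ k ∈ Finset.range n, G.subtypeL.flip (A (ψs k)) = ψ - ψs n := by
    intro n
    induction n with
    | zero => simp [hψs0]
    | succ n ih =>
      rw [Finset.sum_range_succ, ih, hψsS]
      abel
  have hten : Tendsto (fun n => ψs n) atTop (nhds 0) := by
    refine squeeze_zero_norm hnorm ?_
    have := (tendsto_pow_atTop_nhds_zero_of_lt_one hθ0 hθ1).mul_const ‖ψ‖
    simpa using this
  have hsum3 : HasSum (fun n => G.subtypeL.flip (A (ψs n))) (G.subtypeL.flip f) :=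
    (G.subtypeL.flip).hasSum hsum.hasSum
  have h2 : Tendsto (fun n => ψ - ψs n) atTop (nhds (G.subtypeL.flip f)) := by
    have := hsum3.tendsto_sum_nat
    refine this.congr fun n => hpartial n
  have h3 : Tendsto (fun n => ψ - ψs n) atTop (nhds (ψ - 0)) :=
    tendsto_const_nhds.sub hten
  have hfinal : G.subtypeL.flip f = ψ - 0 := tendsto_nhds_unique h2 h3
  exact ⟨f, hfnorm, by rw [hfinal, sub_zero]⟩

end Aux

/-- If `F` is a finite-dimensional subspace of the bidual `X**` with
`X ∩ F = {0}`, then for every `δ > 0` and every `x ∈ X` of norm one there is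
`x* ∈ X*` with `‖x*‖ ≤ 1 + δ`, `x*(x) ≥ d(S_X, F)` and `x**(x*) = 0` for all `x** ∈ F`. -/
theorem statement1 {X : Type*} [NormedAddCommGroup X] [NormedSpace ℝ X] [CompleteSpace X]
    (F : Submodule ℝ (StrongDual ℝ (StrongDual ℝ X)))
    (hFfin : Module.Finite ℝ F)
    (hXF : ∀ x : X, NormedSpace.inclusionInDoubleDual ℝ X x ∈ F → x = 0)
    (δ : ℝ) (hδ : 0 < δ) (x : X) (hx : ‖x‖ = 1) :
    ∃ f : StrongDual ℝ X, ‖f‖ ≤ 1 + δ ∧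
      sInf {r : ℝ | ∃ (y : X) (v : StrongDual ℝ (StrongDual ℝ X)),
        ‖y‖ = 1 ∧ v ∈ F ∧ r = ‖NormedSpace.inclusionInDoubleDual ℝ X y - v‖} ≤ f x ∧
      ∀ v ∈ F, v f = 0 := by
  haveI := hFfin
  letI : NormedAddCommGroup (StrongDual ℝ X) := inferInstance
  letI : NormedSpace ℝ (StrongDual ℝ X) := inferInstance
  letI : NormedAddCommGroup (StrongDual ℝ (StrongDual ℝ X)) := inferInstance
  letI : NormedSpace ℝ (StrongDual ℝ (StrongDual ℝ X)) := inferInstance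
  set J : X → StrongDual ℝ (StrongDual ℝ X) := fun y => NormedSpace.inclusionInDoubleDual ℝ X y with hJdef
  haveI hFc : IsClosed (F : Set (StrongDual ℝ (StrongDual ℝ X))) := Submodule.closed_of_finiteDimensional (E := StrongDual ℝ (StrongDual ℝ X)) F
  have hne : (Submodule.Quotient.mk (J x) : StrongDual ℝ (StrongDual ℝ X) ⧸ F) ≠ 0 := by
    intro h
    have hx0 := hXF x ((Submodule.Quotient.mk_eq_zero (p := F)).mp h)
    rw [hx0, norm_zero] at hx
    norm_num at hx
  obtain ⟨g, hg1, hg2⟩ := exists_dual_vector ℝ _ (norm_ne_zero_iff.mpr hne)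
  have hΦbound : ∀ w : StrongDual ℝ (StrongDual ℝ X), ‖(g.toLinearMap ∘ₗ F.mkQ) w‖ ≤ 1 * ‖w‖ := by
    intro w
    calc ‖g (Submodule.Quotient.mk w)‖ ≤ ‖g‖ * ‖(Submodule.Quotient.mk w : StrongDual ℝ (StrongDual ℝ X) ⧸ F)‖ :=
      g.le_opNorm _
    _ ≤ 1 * ‖w‖ := by
        rw [hg1]
        exact mul_le_mul_of_nonneg_left (Submodule.Quotient.norm_mk_le F w) zero_le_one
  set Φ : StrongDual ℝ (StrongDual ℝ X) →L[ℝ] ℝ :=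
    LinearMap.mkContinuous (g.toLinearMap ∘ₗ F.mkQ) 1 hΦbound with hΦdef
  have hΦnorm : ‖Φ‖ ≤ 1 := LinearMap.mkContinuous_norm_le _ zero_le_one _
  have hΦapp : ∀ w, Φ w = g (Submodule.Quotient.mk w) := fun w => rfl
  set G : Submodule ℝ (StrongDual ℝ (StrongDual ℝ X)) := F ⊔ (ℝ ∙ (J x)) with hGdef
  haveI : FiniteDimensional ℝ G := Submodule.finiteDimensional_sup _ _
  set φ : StrongDual ℝ ↥G := Φ.comp G.subtypeL with hφdef
  have hφnorm : ‖φ‖ ≤ 1 := by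
    refine ContinuousLinearMap.opNorm_le_bound _ zero_le_one fun w => ?_
    calc ‖Φ (w : StrongDual ℝ (StrongDual ℝ X))‖ ≤ ‖Φ‖ * ‖(w : StrongDual ℝ (StrongDual ℝ X))‖ := Φ.le_opNorm _
    _ ≤ 1 * ‖w‖ := by
        refine mul_le_mul hΦnorm ?_ (norm_nonneg _) zero_le_one
        rfl
  obtain ⟨f, hf1, hf2⟩ := aux_surj G hδ φ
  have hfnorm : ‖f‖ ≤ 1 + δ := by
    calc ‖f‖ ≤ (1 + δ) * ‖φ‖ := hf1
    _ ≤ (1 + δ) * 1 := mul_le_mul_of_nonneg_left hφnorm (by linarith)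
    _ = 1 + δ := mul_one _
  have hmemJx : J x ∈ G := Submodule.mem_sup_right (Submodule.mem_span_singleton_self _)
  have hfx : f x = ‖(Submodule.Quotient.mk (J x) : StrongDual ℝ (StrongDual ℝ X) ⧸ F)‖ := by
    have h := congrArg (fun χ : StrongDual ℝ ↥G => χ ⟨J x, hmemJx⟩) hf2
    rw [ContinuousLinearMap.flip_apply, Submodule.subtypeL_apply] at h
    have hL : J x f = f x := rfl
    rw [hL] at h
    rw [h]
    show Φ (J x) = _
    rw [hΦapp, hg2]
    exact congrFun RCLike.ofReal_real_eq_id _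
  refine ⟨f, hfnorm, ?_, ?_⟩
  · rw [hfx]
    refine le_of_forall_pos_le_add fun ε hε => ?_
    obtain ⟨m, hm1, hm2⟩ := Submodule.Quotient.norm_mk_lt
      (Submodule.Quotient.mk (J x) : StrongDual ℝ (StrongDual ℝ X) ⧸ F) hε
    have hvF : J x - m ∈ F := by
      have := (Submodule.Quotient.eq F).mp hm1
      simpa using F.neg_mem this
    have hbdd : BddBelow {r : ℝ | ∃ (y : X) (v : StrongDual ℝ (StrongDual ℝ X)),
        ‖y‖ = 1 ∧ v ∈ F ∧ r = ‖J y - v‖} := by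
      refine ⟨0, fun r hr => ?_⟩
      obtain ⟨y, v, _, _, rfl⟩ := hr
      exact norm_nonneg _
    have hmem : ‖m‖ ∈ {r : ℝ | ∃ (y : X) (v : StrongDual ℝ (StrongDual ℝ X)),
        ‖y‖ = 1 ∧ v ∈ F ∧ r = ‖J y - v‖} := by
      refine ⟨x, J x - m, hx, hvF, ?_⟩
      simp
    have hle : sInf {r : ℝ | ∃ (y : X) (v : StrongDual ℝ (StrongDual ℝ X)),
        ‖y‖ = 1 ∧ v ∈ F ∧ r = ‖J y - v‖} ≤ ‖m‖ := csInf_le hbdd hmem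
    exact hle.trans hm2.le
  · intro v hv
    have hmemv : v ∈ G := Submodule.mem_sup_left hv
    have h := congrArg (fun χ : StrongDual ℝ ↥G => χ ⟨v, hmemv⟩) hf2
    rw [ContinuousLinearMap.flip_apply, Submodule.subtypeL_apply] at h
    rw [h]
    show Φ v = 0
    rw [hΦapp]
    have : (Submodule.Quotient.mk v : StrongDual ℝ (StrongDual ℝ X) ⧸ F) = 0 := (Submodule.Quotient.mk_eq_zero (p := F)).mpr hv
    rw [this, map_zero]
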